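/- Let E ⊂ ℝⁿ be compact and suppose E is weakly mean porous with parameters α, λ satisfying: λ(k)·α(2^{-k})ⁿ/2^{-kn} is non-increasing in k and Σ_{k≥j₀} λ(k)·α(2^{-k})ⁿ/2^{-kn} = ∞. Then m_n(E) = 0. -/

import Mathlib

open Filter Set Real Metric MeasureTheory
open scoped ENNReal

/-- A (closed) cube in `ℝⁿ`. -/
def IsCube {n : ℕ} (Q : Set (EuclideanSpace ℝ (Fin n))) : Prop :=
  ∃ (z : EuclideanSpace ℝ (Fin n)) (r : ℝ), 0 < r ∧
    Q = {y | ∀ i, |y i - z i| ≤ r}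

/-- The dyadic annulus `A_k(x) = {y : 2^{-k} < |x - y| < 2^{-k+1}}`. -/
def annulus {n : ℕ} (x : EuclideanSpace ℝ (Fin n)) (k : ℕ) :
    Set (EuclideanSpace ℝ (Fin n)) :=
  {y | (2:ℝ) ^ (-(k:ℝ)) < dist x y ∧ dist x y < (2:ℝ) ^ (-(k:ℝ) + 1)}

/-- `χ_k^𝒬(x) = 1`: there are `λ k` cubes of `𝒬` inside `A_k(x)`, each of
diameter at least `α(2^{-k})`. -/
def GoodAnnulus {n : ℕ} (𝒬 : Set (Set (EuclideanSpace ℝ (Fin n))))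
    (α : ℝ → ℝ) (lam : ℕ → ℕ) (x : EuclideanSpace ℝ (Fin n)) (k : ℕ) : Prop :=
  ∃ F : Finset (Set (EuclideanSpace ℝ (Fin n))), ↑F ⊆ 𝒬 ∧ F.card = lam k ∧
    ∀ Q ∈ F, Q ⊆ annulus x k ∧ α ((2:ℝ) ^ (-(k:ℝ))) ≤ Metric.diam Q

open scoped Classical in
/-- `S_j^𝒬(x) = Σ_{k=1}^j χ_k^𝒬(x)`. -/
noncomputable def porositySum {n : ℕ}
    (𝒬 : Set (Set (EuclideanSpace ℝ (Fin n)))) (α : ℝ → ℝ) (lam : ℕ → ℕ)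
    (x : EuclideanSpace ℝ (Fin n)) (j : ℕ) : ℕ :=
  ∑ k ∈ Finset.Icc 1 j, if GoodAnnulus 𝒬 α lam x k then 1 else 0

/-- `E` is weakly mean porous with parameters `α` and `λ`. -/
def WeaklyMeanPorous {n : ℕ} (E : Set (EuclideanSpace ℝ (Fin n)))
    (α : ℝ → ℝ) (lam : ℕ → ℕ) : Prop :=
  ∃ (𝒬 : Set (Set (EuclideanSpace ℝ (Fin n)))) (j₀ : ℕ),
    (∀ Q ∈ 𝒬, IsCube Q ∧ Q ∩ E = ∅) ∧
    (∀ Q ∈ 𝒬, ∀ Q' ∈ 𝒬, Q ≠ Q' → Q ∩ Q' = ∅) ∧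
    ∀ x ∈ E, ∀ j ≥ j₀, (j : ℝ) / 2 < (porositySum 𝒬 α lam x j : ℝ)


lemma stmt13_abel_identity (f χ : ℕ → ℝ) (j : ℕ) :
    ∑ k ∈ Finset.Icc 1 j, f k * χ k =
      ∑ k ∈ Finset.Icc 1 j, (f k - f (k+1)) * (∑ i ∈ Finset.Icc 1 k, χ i)
        + f (j+1) * ∑ i ∈ Finset.Icc 1 j, χ i := by
  induction j with
  | zero => simp
  | succ j ih =>
      have hins : Finset.Icc 1 (j+1) = insert (j+1) (Finset.Icc 1 j) :=
        (Finset.insert_Icc_right_eq_Icc_succ (by simp)).symm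
      rw [hins, Finset.sum_insert (by simp), Finset.sum_insert (by simp),
        Finset.sum_insert (by simp), ih]
      have : (∑ i ∈ Finset.Icc 1 (j+1), χ i) = χ (j+1) + ∑ i ∈ Finset.Icc 1 j, χ i := by
        rw [hins, Finset.sum_insert (by simp)]
      rw [this]
      ring

lemma stmt13_abel_id2 (f : ℕ → ℝ) (j : ℕ) :
    ∑ k ∈ Finset.Icc 1 j, (f k - f (k+1)) * (k:ℝ) + f (j+1) * (j:ℝ)
      = ∑ k ∈ Finset.Icc 1 j, f k := by
  induction j with
  | zero => simp
  | succ j ih =>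
      have hins : Finset.Icc 1 (j+1) = insert (j+1) (Finset.Icc 1 j) :=
        (Finset.insert_Icc_right_eq_Icc_succ (by simp)).symm
      rw [hins, Finset.sum_insert (by simp), Finset.sum_insert (by simp)]
      push_cast
      nlinarith [ih]

lemma stmt13_abel_id3 (f : ℕ → ℝ) (j : ℕ) :
    ∑ k ∈ Finset.Icc 1 j, (f k - f (k+1)) + f (j+1) = f 1 := by
  induction j with
  | zero => simp
  | succ j ih =>
      have hins : Finset.Icc 1 (j+1) = insert (j+1) (Finset.Icc 1 j) :=
        (Finset.insert_Icc_right_eq_Icc_succ (by simp)).symm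
      rw [hins, Finset.sum_insert (by simp)]
      linarith [ih]

/-- Abel-type lower bound: if the partial sums of `χ` (a `{0,1}`-type sequence) satisfy
`A k ≥ (k - j₀)/2` and `f` is nonnegative and antitone on `[1, ∞)`, then
`∑ f k χ k ≥ (∑ f k)/2 - (j₀/2) f 1`. -/
lemma stmt13_abel_lower (f χ : ℕ → ℝ) (j₀ j : ℕ)
    (hmono : ∀ k, 1 ≤ k → f (k+1) ≤ f k)
    (hpos : ∀ k, 1 ≤ k → 0 ≤ f k)
    (hA : ∀ k : ℕ, ((k:ℝ) - (j₀:ℝ))/2 ≤ ∑ i ∈ Finset.Icc 1 k, χ i) :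
    (∑ k ∈ Finset.Icc 1 j, f k)/2 - (j₀:ℝ)/2 * f 1 ≤ ∑ k ∈ Finset.Icc 1 j, f k * χ k := by
  rw [stmt13_abel_identity]
  have key : ∑ k ∈ Finset.Icc 1 j, (f k - f (k+1)) * (((k:ℝ) - (j₀:ℝ))/2)
        + f (j+1) * (((j:ℝ) - (j₀:ℝ))/2)
      ≤ ∑ k ∈ Finset.Icc 1 j, (f k - f (k+1)) * (∑ i ∈ Finset.Icc 1 k, χ i)
        + f (j+1) * ∑ i ∈ Finset.Icc 1 j, χ i := by
    refine add_le_add (Finset.sum_le_sum ?_) ?_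
    · intro k hk
      exact mul_le_mul_of_nonneg_left (hA k)
        (sub_nonneg.2 (hmono k (Finset.mem_Icc.1 hk).1))
    · exact mul_le_mul_of_nonneg_left (hA j) (hpos (j+1) (by omega))
  refine le_trans (le_of_eq ?_) key
  have e2 := stmt13_abel_id2 f j
  have e3 := stmt13_abel_id3 f j
  have expand : ∀ k : ℕ, (f k - f (k+1)) * (((k:ℝ) - (j₀:ℝ))/2)
      = ((f k - f (k+1)) * (k:ℝ))/2 - ((j₀:ℝ)/2) * (f k - f (k+1)) := by
    intro k; ring
  rw [Finset.sum_congr rfl (fun k _ => expand k), Finset.sum_sub_distrib,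
    ← Finset.sum_div, ← Finset.mul_sum]
  linear_combination (-1/2 : ℝ) * e2 + ((j₀:ℝ)/2) * e3


/-- Sum over first entries: `∑_{range (j+1)} f = f 0 + ∑_{Icc 1 j} f`. -/
lemma stmt13_range_Icc (f : ℕ → ℝ) (j : ℕ) :
    ∑ k ∈ Finset.range (j+1), f k = f 0 + ∑ k ∈ Finset.Icc 1 j, f k := by
  induction j with
  | zero => simp
  | succ j ih =>
      rw [Finset.sum_range_succ, ih,
        show Finset.Icc 1 (j+1) = insert (j+1) (Finset.Icc 1 j) from
          (Finset.insert_Icc_right_eq_Icc_succ (by simp)).symm,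
        Finset.sum_insert (by simp)]
      ring

/-- Geometric window bound: if `g (k+m) ≤ g k * (1/2)^m` and `g > 0` on `k ≥ 1`,
then the sum of `g k ^ n` over `k ∈ [1,j]` with `g k ≤ D` is at most `2 D^n`. -/
lemma stmt13_window (g : ℕ → ℝ) (n : ℕ) (hn : 1 ≤ n)
    (hgpos : ∀ k, 1 ≤ k → 0 < g k)
    (hdec : ∀ k m, 1 ≤ k → g (k+m) ≤ g k * (1/2)^m)
    (D : ℝ) (hD : 0 ≤ D) (j : ℕ) :
    ∑ k ∈ (Finset.Icc 1 j).filter (fun k => g k ≤ D), (g k)^n ≤ 2 * D^n := by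
  set S := (Finset.Icc 1 j).filter (fun k => g k ≤ D) with hS
  rcases S.eq_empty_or_nonempty with h | h
  · rw [h]; simp; positivity
  · set F := S.min' h with hF
    have hFS : F ∈ S := S.min'_mem h
    have hF1 : 1 ≤ F := (Finset.mem_Icc.1 (Finset.mem_filter.1 hFS).1).1
    have hFD : g F ≤ D := (Finset.mem_filter.1 hFS).2
    have hterm : ∀ k ∈ S, (g k)^n ≤ D^n * (1/2)^(k - F) := by
      intro k hk
      have hkF : F ≤ k := S.min'_le k hk
      have hgk : g k ≤ g F * (1/2)^(k - F) := by
        have := hdec F (k - F) hF1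
        rwa [Nat.add_sub_cancel' hkF] at this
      have h0 : (0:ℝ) ≤ g k := (hgpos k (le_trans hF1 hkF)).le
      calc (g k)^n ≤ (g F * (1/2)^(k-F))^n := pow_le_pow_left₀ h0 hgk n
        _ = (g F)^n * ((1/2)^(k-F))^n := by rw [mul_pow]
        _ ≤ D^n * (1/2)^(k-F) := by
            have h1 : (g F)^n ≤ D^n :=
              pow_le_pow_left₀ (hgpos F hF1).le hFD n
            have h2 : ((1/2:ℝ)^(k-F))^n ≤ (1/2)^(k-F) := by
              rw [← pow_mul]
              refine pow_le_pow_of_le_one (by norm_num) (by norm_num) ?_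
              exact Nat.le_mul_of_pos_right _ hn
            have h3 : (0:ℝ) ≤ (g F)^n := pow_nonneg (hgpos F hF1).le n
            have h4 : (0:ℝ) ≤ ((1/2:ℝ)^(k-F))^n := by positivity
            exact mul_le_mul h1 h2 h4 (by positivity)
    calc ∑ k ∈ S, (g k)^n ≤ ∑ k ∈ S, D^n * (1/2)^(k - F) :=
          Finset.sum_le_sum hterm
      _ ≤ ∑ k ∈ Finset.Icc F j, D^n * (1/2)^(k - F) := by
          refine Finset.sum_le_sum_of_subset_of_nonneg ?_ (fun k _ _ => by positivity)
          intro k hk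
          exact Finset.mem_Icc.2 ⟨S.min'_le k hk, (Finset.mem_Icc.1 (Finset.mem_filter.1 hk).1).2⟩
      _ ≤ 2 * D^n := by
          rw [← Finset.mul_sum]
          have : ∑ k ∈ Finset.Icc F j, (1/2:ℝ)^(k - F)
              = ∑ m ∈ Finset.range (j + 1 - F), (1/2:ℝ)^m := by
            rw [show Finset.Icc F j = Finset.Ico F (j+1) from rfl, Finset.sum_Ico_eq_sum_range]
            exact Finset.sum_congr rfl (fun m _ => by rw [Nat.add_sub_cancel_left])
          rw [this, mul_comm]
          exact mul_le_mul_of_nonneg_right (sum_geometric_two_le _) (by positivity)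

section scales
variable (k : ℕ)

lemma stmt13_t_pos (k : ℕ) : (0:ℝ) < (2:ℝ) ^ (-(k:ℝ)) := Real.rpow_pos_of_pos two_pos _

lemma stmt13_t_le_half {k : ℕ} (hk : 1 ≤ k) : (2:ℝ) ^ (-(k:ℝ)) ≤ 1/2 := by
  have : (2:ℝ) ^ (-(k:ℝ)) ≤ (2:ℝ) ^ (-(1:ℝ)) := by
    apply Real.rpow_le_rpow_of_exponent_le one_le_two
    have : (1:ℝ) ≤ (k:ℝ) := by exact_mod_cast hk
    linarith
  calc (2:ℝ) ^ (-(k:ℝ)) ≤ (2:ℝ) ^ (-(1:ℝ)) := this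
    _ = 1/2 := by
      rw [Real.rpow_neg_one]; norm_num

lemma stmt13_t_mem {k : ℕ} (hk : 1 ≤ k) : (2:ℝ) ^ (-(k:ℝ)) ∈ Ioo (0:ℝ) 1 :=
  ⟨stmt13_t_pos k, lt_of_le_of_lt (stmt13_t_le_half hk) (by norm_num)⟩

lemma stmt13_t_succ (k : ℕ) :
    (2:ℝ) ^ (-((k+1:ℕ):ℝ)) = (2:ℝ) ^ (-(k:ℝ)) * (1/2) := by
  push_cast
  rw [neg_add, Real.rpow_add two_pos]
  rw [Real.rpow_neg_one]
  norm_num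

lemma stmt13_t_shift (k m : ℕ) :
    (2:ℝ) ^ (-((k+m:ℕ):ℝ)) = (2:ℝ) ^ (-(k:ℝ)) * (1/2)^m := by
  induction m with
  | zero => simp
  | succ m ih =>
      have : ((k + (m+1) : ℕ) : ℝ) = (((k+m : ℕ) + 1 : ℕ) : ℝ) := by push_cast; ring
      rw [show (k + (m+1) : ℕ) = ((k+m) + 1 : ℕ) by omega, stmt13_t_succ, ih]
      ring

lemma stmt13_outer (k : ℕ) :
    (2:ℝ) ^ (-(k:ℝ) + 1) = 2 * (2:ℝ) ^ (-(k:ℝ)) := by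
  rw [Real.rpow_add two_pos, Real.rpow_one]
  ring
end scales

-- coordinate bound
lemma stmt13_coord {n : ℕ} (a b : EuclideanSpace ℝ (Fin n)) (i : Fin n) :
    |a i - b i| ≤ dist a b := by
  rw [EuclideanSpace.dist_eq]
  have h1 : |a i - b i| = Real.sqrt (dist (a i) (b i) ^ 2) := by
    rw [Real.sqrt_sq_eq_abs, Real.dist_eq, abs_abs]
  rw [h1]
  apply Real.sqrt_le_sqrt
  exact Finset.single_le_sum (f := fun i => dist (a i) (b i) ^ 2)
    (fun i _ => sq_nonneg _) (Finset.mem_univ i)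

-- cube geometry
section cube
variable {n : ℕ} (z : EuclideanSpace ℝ (Fin n)) {r : ℝ}

lemma stmt13_cube_mem_center (hr : 0 < r) :
    z ∈ {y : EuclideanSpace ℝ (Fin n) | ∀ i, |y i - z i| ≤ r} := by
  intro i; simp [hr.le]

lemma stmt13_ball_subset_cube (hr : 0 < r) :
    Metric.ball z r ⊆ {y : EuclideanSpace ℝ (Fin n) | ∀ i, |y i - z i| ≤ r} := by
  intro y hy i
  have := stmt13_coord y z i
  have hd : dist y z < r := Metric.mem_ball.1 hy
  linarith

lemma stmt13_cube_closed (hr : 0 < r) :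
    IsClosed {y : EuclideanSpace ℝ (Fin n) | ∀ i, |y i - z i| ≤ r} := by
  have : {y : EuclideanSpace ℝ (Fin n) | ∀ i, |y i - z i| ≤ r}
      = ⋂ i, (fun y : EuclideanSpace ℝ (Fin n) => |y i - z i|) ⁻¹' (Iic r) := by
    ext y; simp [mem_iInter]
  rw [this]
  refine isClosed_iInter (fun i => IsClosed.preimage ?_ isClosed_Iic)
  have hc : Continuous fun y : EuclideanSpace ℝ (Fin n) => y i :=
    (EuclideanSpace.proj (𝕜 := ℝ) i).continuous
  exact (hc.sub continuous_const).abs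

lemma stmt13_cube_diam (hr : 0 < r) :
    Metric.diam {y : EuclideanSpace ℝ (Fin n) | ∀ i, |y i - z i| ≤ r}
      ≤ 2 * r * Real.sqrt n := by
  apply Metric.diam_le_of_forall_dist_le (by positivity)
  intro y hy y' hy'
  rw [EuclideanSpace.dist_eq]
  have hsum : ∑ i, dist (y i) (y' i) ^ 2 ≤ (n : ℝ) * (2*r)^2 := by
    calc ∑ i, dist (y i) (y' i) ^ 2 ≤ ∑ _i : Fin n, (2*r)^2 := by
          refine Finset.sum_le_sum (fun i _ => ?_)
          have h1 : |y i - z i| ≤ r := hy i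
          have h2 : |y' i - z i| ≤ r := hy' i
          have h3 : dist (y i) (y' i) ≤ 2*r := by
            rw [Real.dist_eq]
            have := abs_sub_abs_le_abs_sub (y i - z i) (y' i - z i)
            have h4 : |y i - y' i| ≤ |y i - z i| + |y' i - z i| := by
              have : y i - y' i = (y i - z i) - (y' i - z i) := by ring
              rw [this]
              exact abs_sub (y i - z i) (y' i - z i)
            linarith
          have h0 : (0:ℝ) ≤ dist (y i) (y' i) := dist_nonneg
          nlinarith
      _ = (n : ℝ) * (2*r)^2 := by simp [Finset.sum_const, mul_comm]
  calc Real.sqrt (∑ i, dist (y i) (y' i) ^ 2) ≤ Real.sqrt ((n:ℝ) * (2*r)^2) :=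
        Real.sqrt_le_sqrt hsum
    _ = 2 * r * Real.sqrt n := by
        rw [Real.sqrt_mul (by positivity), Real.sqrt_sq (by positivity)]
        ring
end cube

noncomputable def stmt13_f (n : ℕ) (α : ℝ → ℝ) (lam : ℕ → ℕ) (k : ℕ) : ℝ :=
  (lam k : ℝ) * α ((2:ℝ) ^ (-(k:ℝ))) ^ n / ((2:ℝ) ^ (-(k:ℝ))) ^ n


lemma stmt13_key (n : ℕ) (hn : 2 ≤ n)
    (E : Set (EuclideanSpace ℝ (Fin n))) (hE : IsCompact E)
    (α : ℝ → ℝ) (lam : ℕ → ℕ)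
    (hα_maps : ∀ t ∈ Ioo (0:ℝ) 1, α t ∈ Ioo (0:ℝ) 1)
    (hα_mono : MonotoneOn (fun t => α t / t) (Ioo 0 1))
    (hmonot : Antitone (stmt13_f n α lam))
    (𝒬 : Set (Set (EuclideanSpace ℝ (Fin n)))) (j₀ : ℕ)
    (hQE : ∀ Q ∈ 𝒬, IsCube Q ∧ Q ∩ E = ∅)
    (hQdisj : ∀ Q ∈ 𝒬, ∀ Q' ∈ 𝒬, Q ≠ Q' → Q ∩ Q' = ∅)
    (hpor : ∀ x ∈ E, ∀ j ≥ j₀, (j : ℝ) / 2 < (porositySum 𝒬 α lam x j : ℝ)) :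
    ∃ K : ℝ≥0∞, K ≠ ⊤ ∧ ∀ j : ℕ,
      ENNReal.ofReal ((∑ k ∈ Finset.Icc 1 j, stmt13_f n α lam k)/2
          - (j₀:ℝ)/2 * stmt13_f n α lam 1) * volume E ≤ K := by
  classical
  haveI : Nontrivial (EuclideanSpace ℝ (Fin n)) := by
    apply Module.nontrivial_of_finrank_pos (R := ℝ)
    rw [finrank_euclideanSpace_fin]
    omega
  -- scales and weights
  set t : ℕ → ℝ := fun k => (2:ℝ) ^ (-(k:ℝ)) with ht
  set g : ℕ → ℝ := fun k => α (t k) with hg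
  have hgpos : ∀ k, 1 ≤ k → 0 < g k := fun k hk => (hα_maps _ (stmt13_t_mem hk)).1
  have hdec : ∀ k m, 1 ≤ k → g (k+m) ≤ g k * (1/2)^m := by
    intro k m hk
    have hmem1 : t (k+m) ∈ Ioo (0:ℝ) 1 := stmt13_t_mem (by omega)
    have hmem2 : t k ∈ Ioo (0:ℝ) 1 := stmt13_t_mem hk
    have hle : t (k+m) ≤ t k := by
      rw [show t (k+m) = t k * (1/2)^m from stmt13_t_shift k m]
      nlinarith [stmt13_t_pos k, pow_le_one₀ (by norm_num : (0:ℝ) ≤ 1/2) (by norm_num : (1:ℝ)/2 ≤ 1) (n := m)]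
    have hmono := hα_mono hmem1 hmem2 hle
    have h1 : g (k+m) = (α (t (k+m)) / t (k+m)) * t (k+m) := by
      have htkm : 0 < t (k+m) := stmt13_t_pos (k+m)
      field_simp
      rfl
    have h2 : (α (t k) / t k) * t (k+m) = g k * (1/2)^m := by
      rw [show t (k+m) = t k * (1/2)^m from stmt13_t_shift k m]
      have htk : 0 < t k := stmt13_t_pos k
      field_simp
      rfl
    calc g (k+m) = (α (t (k+m)) / t (k+m)) * t (k+m) := h1
      _ ≤ (α (t k) / t k) * t (k+m) :=
          mul_le_mul_of_nonneg_right hmono hmem1.1.le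
      _ = g k * (1/2)^m := h2
  -- the cube family near E
  set 𝒞 : Set (Set (EuclideanSpace ℝ (Fin n))) :=
    {Q | Q ∈ 𝒬 ∧ Q ⊆ Metric.thickening 2 E} with h𝒞
  have hcube' : ∀ Q : Set (EuclideanSpace ℝ (Fin n)), Q ∈ 𝒞 →
      ∃ z : EuclideanSpace ℝ (Fin n), ∃ r : ℝ, 0 < r ∧
        Q = {y | ∀ i, |y i - z i| ≤ r} := fun Q hQ => (hQE Q hQ.1).1
  choose! z rad hrad hQeq using hcube'
  have hzmem : ∀ Q (hQ : Q ∈ 𝒞), z Q ∈ Q := by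
    intro Q hQ
    have h := stmt13_cube_mem_center (z Q) (hrad Q hQ)
    rw [← hQeq Q hQ] at h; exact h
  have hball : ∀ Q (hQ : Q ∈ 𝒞), Metric.ball (z Q) (rad Q) ⊆ Q := by
    intro Q hQ
    have h := stmt13_ball_subset_cube (z Q) (hrad Q hQ)
    rw [← hQeq Q hQ] at h; exact h
  have hQclosed : ∀ Q (hQ : Q ∈ 𝒞), MeasurableSet Q := by
    intro Q hQ
    have h := (stmt13_cube_closed (z Q) (hrad Q hQ)).measurableSet
    rw [← hQeq Q hQ] at h; exact h
  have hQdiam : ∀ Q (hQ : Q ∈ 𝒞), Metric.diam Q ≤ 2 * rad Q * Real.sqrt n := by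
    intro Q hQ
    have h := stmt13_cube_diam (z Q) (hrad Q hQ)
    rw [← hQeq Q hQ] at h; exact h
  set B1 : ℝ≥0∞ := volume (Metric.ball (0 : EuclideanSpace ℝ (Fin n)) 1) with hB1
  have hQvol : ∀ Q (hQ : Q ∈ 𝒞),
      ENNReal.ofReal ((rad Q)^n) * B1 ≤ volume Q := by
    intro Q hQ
    have h1 : volume (Metric.ball (z Q) (rad Q))
        = ENNReal.ofReal ((rad Q)^n) * B1 := by
      rw [MeasureTheory.Measure.addHaar_ball volume (z Q) (hrad Q hQ).le,
        finrank_euclideanSpace_fin]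
    rw [← h1]
    exact measure_mono (hball Q hQ)
  have hdisj : 𝒞.PairwiseDisjoint id := by
    intro Q hQ Q' hQ' hne
    simp only [Function.onFun, id]
    rw [Set.disjoint_iff_inter_eq_empty]
    exact hQdisj Q hQ.1 Q' hQ'.1 hne
  have hcount : 𝒞.Countable := by
    apply hdisj.countable_of_nonempty_interior
    intro Q hQ
    exact ⟨z Q, interior_maximal (hball Q hQ) Metric.isOpen_ball
      (Metric.mem_ball_self (hrad Q hQ))⟩
  haveI : Countable ↥𝒞 := hcount.to_subtype
  obtain ⟨R, hR⟩ := (hE.isBounded.thickening (δ := 2)).subset_closedBall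
    (0 : EuclideanSpace ℝ (Fin n))
  set KB : ℝ≥0∞ := volume (Metric.closedBall (0 : EuclideanSpace ℝ (Fin n)) R) with hKB
  have hKBfin : KB ≠ ⊤ := measure_closedBall_lt_top.ne
  set C1 : ℝ≥0∞ := ENNReal.ofReal (2^n * 2 * (2*Real.sqrt n)^n) with hC1
  refine ⟨C1 * KB, ENNReal.mul_ne_top ENNReal.ofReal_ne_top hKBfin, fun j => ?_⟩
  -- now the estimate for a fixed j
  set w : ℕ → ℝ≥0∞ := fun k => ENNReal.ofReal (g k ^ n / (t k)^n) with hw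
  set ind : ℕ → ↥𝒞 → (EuclideanSpace ℝ (Fin n)) → ℝ≥0∞ := fun k Q x =>
    (Metric.ball (z ↑Q) (2 * t k)).indicator
      (fun _ => if g k ≤ Metric.diam (Q : Set (EuclideanSpace ℝ (Fin n))) then w k else 0) x
    with hind
  set ψ : EuclideanSpace ℝ (Fin n) → ℝ≥0∞ := fun x =>
    ∑ k ∈ Finset.Icc 1 j,
      (if GoodAnnulus 𝒬 α lam x k then ENNReal.ofReal (stmt13_f n α lam k) else 0) with hψ
  set G : EuclideanSpace ℝ (Fin n) → ℝ≥0∞ := fun x =>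
    ∑' Q : ↥𝒞, ∑ k ∈ Finset.Icc 1 j, ind k Q x with hG
  have hf_anti : ∀ k, 1 ≤ k → stmt13_f n α lam (k+1) ≤ stmt13_f n α lam k :=
    fun k _ => hmonot (Nat.le_succ k)
  have hf_nonneg : ∀ k, 1 ≤ k → 0 ≤ stmt13_f n α lam k := by
    intro k hk
    have h1 : (0:ℝ) ≤ α ((2:ℝ) ^ (-(k:ℝ))) := (hgpos k hk).le
    have h2 := stmt13_t_pos k
    unfold stmt13_f
    apply div_nonneg
    · exact mul_nonneg (Nat.cast_nonneg _) (pow_nonneg h1 n)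
    · exact pow_nonneg h2.le n
  have hEm : MeasurableSet E := hE.isClosed.measurableSet
  set L : ℝ := (∑ k ∈ Finset.Icc 1 j, stmt13_f n α lam k)/2
      - (j₀:ℝ)/2 * stmt13_f n α lam 1 with hL
  -- Step 1 : pointwise lower bound on E
  have hlow : ∀ x ∈ E, ENNReal.ofReal L ≤ ψ x := by
    intro x hx
    set χ : ℕ → ℝ := fun k => if GoodAnnulus 𝒬 α lam x k then 1 else 0 with hχ
    have hA : ∀ k : ℕ, ((k:ℝ) - (j₀:ℝ))/2 ≤ ∑ i ∈ Finset.Icc 1 k, χ i := by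
      intro k
      have hcast : ((porositySum 𝒬 α lam x k : ℕ) : ℝ) = ∑ i ∈ Finset.Icc 1 k, χ i := by
        unfold porositySum
        push_cast
        refine Finset.sum_congr rfl (fun i _ => ?_)
        by_cases h : GoodAnnulus 𝒬 α lam x i <;> simp [hχ, h]
      by_cases hk : j₀ ≤ k
      · have hp := hpor x hx k hk
        rw [hcast] at hp
        have hj0 : (0:ℝ) ≤ (j₀:ℝ) := Nat.cast_nonneg _
        linarith
      · push_neg at hk
        have h0 : (0:ℝ) ≤ ∑ i ∈ Finset.Icc 1 k, χ i := by
          refine Finset.sum_nonneg (fun i _ => ?_)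
          by_cases h : GoodAnnulus 𝒬 α lam x i <;> simp [hχ, h]
        have hk' : (k:ℝ) < (j₀:ℝ) := by exact_mod_cast hk
        linarith
    have habel := stmt13_abel_lower (stmt13_f n α lam) χ j₀ j hf_anti hf_nonneg hA
    have hsum_eq : ψ x
        = ENNReal.ofReal (∑ k ∈ Finset.Icc 1 j, stmt13_f n α lam k * χ k) := by
      rw [ENNReal.ofReal_sum_of_nonneg (fun k hk => ?_)]
      · simp only [hψ]
        refine Finset.sum_congr rfl (fun k hk => ?_)
        by_cases h : GoodAnnulus 𝒬 α lam x k
        · simp [hχ, h]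
        · simp [hχ, h]
      · by_cases h : GoodAnnulus 𝒬 α lam x k
        · simp only [hχ, if_pos h, mul_one]
          exact hf_nonneg k (Finset.mem_Icc.1 hk).1
        · simp [hχ, h]
    rw [hsum_eq]
    exact ENNReal.ofReal_le_ofReal habel
  -- Step 2 : pointwise majorization by the cube function
  have hmid : ∀ x, E.indicator ψ x ≤ G x := by
    intro x
    by_cases hx : x ∈ E
    · rw [Set.indicator_of_mem hx]
      have hkb : ∀ k ∈ Finset.Icc 1 j,
          (if GoodAnnulus 𝒬 α lam x k then ENNReal.ofReal (stmt13_f n α lam k) else 0)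
            ≤ ∑' Q : ↥𝒞, ind k Q x := by
        intro k hk
        have hk1 : 1 ≤ k := (Finset.mem_Icc.1 hk).1
        by_cases hGood : GoodAnnulus 𝒬 α lam x k
        · rw [if_pos hGood]
          obtain ⟨F, hF𝒬, hFcard, hFprop⟩ := hGood
          have hFin𝒞 : ∀ Q ∈ F, Q ∈ 𝒞 := by
            intro Q hQF
            refine ⟨hF𝒬 hQF, ?_⟩
            intro y hy
            have hann := (hFprop Q hQF).1 hy
            rw [Metric.mem_thickening_iff]
            refine ⟨x, hx, ?_⟩
            have h1 : dist x y < (2:ℝ)^(-(k:ℝ)+1) := hann.2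
            have h2 : (2:ℝ)^(-(k:ℝ)+1) = 2 * t k := stmt13_outer k
            have h3 : t k ≤ 1/2 := stmt13_t_le_half hk1
            rw [dist_comm]
            linarith
          have hxball : ∀ Q, Q ∈ F → x ∈ Metric.ball (z Q) (2 * t k) := by
            intro Q hQF
            have hz := hzmem Q (hFin𝒞 Q hQF)
            have hann := (hFprop Q hQF).1 hz
            rw [Metric.mem_ball, dist_comm]
            have h1 : dist x (z Q) < (2:ℝ)^(-(k:ℝ)+1) := hann.2
            have h2 : (2:ℝ)^(-(k:ℝ)+1) = 2 * t k := stmt13_outer k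
            rw [dist_comm]
            linarith
          set F' : Finset ↥𝒞 := F.subtype (· ∈ 𝒞) with hF'
          have hF'card : F'.card = lam k := by
            rw [hF', Finset.card_subtype, Finset.filter_true_of_mem hFin𝒞]
            exact hFcard
          have hval : ∀ Q' ∈ F', ind k Q' x = w k := by
            intro Q' hQ'
            have hQF : (Q' : Set (EuclideanSpace ℝ (Fin n))) ∈ F :=
              Finset.mem_subtype.1 hQ'
            simp only [hind]
            rw [Set.indicator_of_mem (hxball _ hQF)]
            rw [if_pos ((hFprop _ hQF).2)]
          have hofReal : ENNReal.ofReal (stmt13_f n α lam k) = (lam k : ℝ≥0∞) * w k := by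
            unfold stmt13_f
            rw [mul_div_assoc, ENNReal.ofReal_mul (Nat.cast_nonneg _)]
            simp only [ENNReal.ofReal_natCast]; rfl
          calc ENNReal.ofReal (stmt13_f n α lam k) = (lam k : ℝ≥0∞) * w k := hofReal
            _ = ∑ Q' ∈ F', ind k Q' x := by
                rw [Finset.sum_congr rfl hval, Finset.sum_const, hF'card, nsmul_eq_mul]
            _ ≤ ∑' Q : ↥𝒞, ind k Q x := ENNReal.sum_le_tsum F'
        · rw [if_neg hGood]; exact zero_le
      calc ψ x ≤ ∑ k ∈ Finset.Icc 1 j, ∑' Q : ↥𝒞, ind k Q x :=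
            Finset.sum_le_sum hkb
        _ = G x := (Summable.tsum_finsetSum (fun k _ => ENNReal.summable)).symm
    · rw [Set.indicator_of_notMem hx]; exact zero_le
  -- Step 3 : integral upper bound
  have hindmeas : ∀ (k : ℕ) (Q : ↥𝒞), Measurable (fun x => ind k Q x) := by
    intro k Q
    simp only [hind]
    exact Measurable.indicator measurable_const measurableSet_ball
  have hup : ∫⁻ x, G x ≤ C1 * KB := by
    have h1 : ∫⁻ x, G x = ∑' Q : ↥𝒞, ∑ k ∈ Finset.Icc 1 j, ∫⁻ x, ind k Q x := by
      simp only [hG]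
      rw [lintegral_tsum
        (fun Q => (Finset.measurable_sum _ (fun k _ => hindmeas k Q)).aemeasurable)]
      exact tsum_congr (fun Q => lintegral_finset_sum _ (fun k _ => hindmeas k Q))
    have h2 : ∀ Q : ↥𝒞, ∑ k ∈ Finset.Icc 1 j, ∫⁻ x, ind k Q x
        ≤ C1 * volume (Q : Set (EuclideanSpace ℝ (Fin n))) := by
      intro Q
      have hQmem : (Q : Set (EuclideanSpace ℝ (Fin n))) ∈ 𝒞 := Q.2
      set D : ℝ := Metric.diam (Q : Set (EuclideanSpace ℝ (Fin n))) with hD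
      have hDnn : 0 ≤ D := Metric.diam_nonneg
      have hradpos : 0 < rad (Q : Set (EuclideanSpace ℝ (Fin n))) := hrad _ hQmem
      have hstep : ∀ k ∈ Finset.Icc 1 j, ∫⁻ x, ind k Q x
          = (if g k ≤ D then ENNReal.ofReal (2^n * g k ^ n) else 0) * B1 := by
        intro k hk
        have hk1 : 1 ≤ k := (Finset.mem_Icc.1 hk).1
        simp only [hind]
        rw [lintegral_indicator_const measurableSet_ball]
        have hvb : volume (Metric.ball (z (Q : Set (EuclideanSpace ℝ (Fin n)))) (2 * t k))
            = ENNReal.ofReal ((2 * t k)^n) * B1 := by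
          rw [MeasureTheory.Measure.addHaar_ball volume _
            (by positivity : (0:ℝ) ≤ 2 * t k), finrank_euclideanSpace_fin]
        rw [hvb]
        by_cases hcond : g k ≤ D
        · rw [if_pos hcond, if_pos hcond]
          simp only [hw]
          rw [← mul_assoc, ← ENNReal.ofReal_mul
            (div_nonneg (pow_nonneg (hgpos k hk1).le n) (pow_nonneg (stmt13_t_pos k).le n))]
          congr 2
          have htne : t k ≠ 0 := (stmt13_t_pos k).ne'
          field_simp
          ring
        · rw [if_neg hcond, if_neg hcond, zero_mul, zero_mul]
      rw [Finset.sum_congr rfl hstep, ← Finset.sum_mul]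
      have hsum2 : ∑ k ∈ Finset.Icc 1 j, (if g k ≤ D then ENNReal.ofReal (2^n * g k ^ n) else 0)
          = ENNReal.ofReal (∑ k ∈ (Finset.Icc 1 j).filter (fun k => g k ≤ D),
              2^n * g k ^ n) := by
        rw [Finset.sum_filter, ENNReal.ofReal_sum_of_nonneg (fun k hk => ?_)]
        · refine Finset.sum_congr rfl (fun k hk => ?_)
          by_cases h : g k ≤ D
          · rw [if_pos h, if_pos h]
          · rw [if_neg h, if_neg h, ENNReal.ofReal_zero]
        · by_cases h : g k ≤ D
          · rw [if_pos h]
            have : (0:ℝ) ≤ g k ^ n := pow_nonneg (hgpos k (Finset.mem_Icc.1 hk).1).le n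
            positivity
          · rw [if_neg h]
      have hwin := stmt13_window g n (by omega) hgpos hdec D hDnn j
      have hfilter : ∑ k ∈ (Finset.Icc 1 j).filter (fun k => g k ≤ D), 2^n * g k ^ n
          ≤ 2^n * (2 * D^n) := by
        rw [← Finset.mul_sum]
        have h2n : (0:ℝ) ≤ 2^n := by positivity
        nlinarith [hwin]
      have hD2 : D ^ n ≤ (2*Real.sqrt n)^n * (rad (Q : Set (EuclideanSpace ℝ (Fin n))))^n := by
        have hd := hQdiam _ hQmem
        calc D^n ≤ (2 * rad (Q : Set (EuclideanSpace ℝ (Fin n))) * Real.sqrt n)^n :=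
              pow_le_pow_left₀ hDnn hd n
          _ = (2*Real.sqrt n)^n * (rad (Q : Set (EuclideanSpace ℝ (Fin n))))^n := by
              rw [show 2 * rad (Q : Set (EuclideanSpace ℝ (Fin n))) * Real.sqrt n
                  = (2*Real.sqrt n) * rad (Q : Set (EuclideanSpace ℝ (Fin n))) by ring,
                mul_pow]
      rw [hsum2]
      calc ENNReal.ofReal (∑ k ∈ (Finset.Icc 1 j).filter (fun k => g k ≤ D),
              2^n * g k ^ n) * B1
          ≤ ENNReal.ofReal ((2^n * 2 * (2*Real.sqrt n)^n)
              * (rad (Q : Set (EuclideanSpace ℝ (Fin n))))^n) * B1 := by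
            refine mul_le_mul_left (ENNReal.ofReal_le_ofReal ?_) B1
            have h2n : (0:ℝ) ≤ 2^n := by positivity
            have hmul : 2^n * (2 * D^n) ≤ (2^n * 2)
                * ((2*Real.sqrt n)^n * (rad (Q : Set (EuclideanSpace ℝ (Fin n))))^n) :=
              by nlinarith [hD2]
            nlinarith [hfilter]
        _ = C1 * (ENNReal.ofReal ((rad (Q : Set (EuclideanSpace ℝ (Fin n))))^n) * B1) := by
            rw [ENNReal.ofReal_mul (by positivity), mul_assoc, ← hC1]
        _ ≤ C1 * volume (Q : Set (EuclideanSpace ℝ (Fin n))) :=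
            mul_le_mul_right (hQvol _ hQmem) C1
    have h4 : ∑' Q : ↥𝒞, volume (Q : Set (EuclideanSpace ℝ (Fin n)))
        = volume (⋃ Q ∈ 𝒞, Q) :=
      (measure_biUnion hcount hdisj (fun Q hQ => hQclosed Q hQ)).symm
    have h5 : volume (⋃ Q ∈ 𝒞, Q) ≤ KB := by
      refine measure_mono ?_
      intro y hy
      simp only [Set.mem_iUnion] at hy
      obtain ⟨Q, hQ, hyQ⟩ := hy
      exact hR (hQ.2 hyQ)
    calc ∫⁻ x, G x = ∑' Q : ↥𝒞, ∑ k ∈ Finset.Icc 1 j, ∫⁻ x, ind k Q x := h1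
      _ ≤ ∑' Q : ↥𝒞, C1 * volume (Q : Set (EuclideanSpace ℝ (Fin n))) :=
          ENNReal.tsum_le_tsum h2
      _ = C1 * ∑' Q : ↥𝒞, volume (Q : Set (EuclideanSpace ℝ (Fin n))) :=
          ENNReal.tsum_mul_left
      _ = C1 * volume (⋃ Q ∈ 𝒞, Q) := by rw [h4]
      _ ≤ C1 * KB := mul_le_mul_right h5 C1
  -- combine
  calc ENNReal.ofReal L * volume E
      = ∫⁻ x, E.indicator (fun _ => ENNReal.ofReal L) x := by
        rw [lintegral_indicator_const hEm]
    _ ≤ ∫⁻ x, E.indicator ψ x := by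
        refine lintegral_mono (fun x => ?_)
        by_cases hx : x ∈ E
        · rw [Set.indicator_of_mem hx, Set.indicator_of_mem hx]; exact hlow x hx
        · rw [Set.indicator_of_notMem hx, Set.indicator_of_notMem hx]
    _ ≤ ∫⁻ x, G x := lintegral_mono hmid
    _ ≤ C1 * KB := hup

/-- Let `E ⊂ ℝⁿ` be compact and weakly mean porous with
parameters `α, λ` such that `λ(k) α(2^{-k})ⁿ / 2^{-kn}` is non-increasing in `k`
and `Σ_{k ≥ j₀} λ(k) α(2^{-k})ⁿ / 2^{-kn} = ∞`. Then `m_n(E) = 0`. -/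
theorem stmt13 (n : ℕ) (hn : 2 ≤ n)
    (E : Set (EuclideanSpace ℝ (Fin n))) (hE : IsCompact E)
    (α : ℝ → ℝ) (lam : ℕ → ℕ)
    (hα_maps : ∀ t ∈ Ioo (0:ℝ) 1, α t ∈ Ioo (0:ℝ) 1)
    (hα_cont : ContinuousOn α (Ioo 0 1))
    (hα_mono : MonotoneOn (fun t => α t / t) (Ioo 0 1))
    (hporous : WeaklyMeanPorous E α lam)
    (hmonot : Antitone (fun k : ℕ =>
      (lam k : ℝ) * α ((2:ℝ) ^ (-(k:ℝ))) ^ n / ((2:ℝ) ^ (-(k:ℝ))) ^ n))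
    (hdiv : Tendsto (fun j : ℕ => ∑ k ∈ Finset.range j,
        (lam k : ℝ) * α ((2:ℝ) ^ (-(k:ℝ))) ^ n / ((2:ℝ) ^ (-(k:ℝ))) ^ n)
      atTop atTop) :
    volume E = 0 := by
  classical
  obtain ⟨𝒬, j₀, hQE, hQdisj, hpor⟩ := hporous
  have hmonot' : Antitone (stmt13_f n α lam) := hmonot
  obtain ⟨K, hKfin, hKey⟩ :=
    stmt13_key n hn E hE α lam hα_maps hα_mono hmonot' 𝒬 j₀ hQE hQdisj hpor
  by_contra hvol
  have hv0 : volume E ≠ 0 := hvol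
  have hvfin : volume E ≠ ⊤ := hE.measure_lt_top.ne
  have hdiv' : Tendsto (fun j : ℕ => ∑ k ∈ Finset.range j, stmt13_f n α lam k)
      atTop atTop := hdiv
  have hIcc : Tendsto (fun j : ℕ => ∑ k ∈ Finset.Icc 1 j, stmt13_f n α lam k)
      atTop atTop := by
    have heq : ∀ j : ℕ, ∑ k ∈ Finset.Icc 1 j, stmt13_f n α lam k
        = (∑ k ∈ Finset.range (j+1), stmt13_f n α lam k) + (-(stmt13_f n α lam 0)) := by
      intro j; rw [stmt13_range_Icc]; ring
    exact Tendsto.congr (fun j => (heq j).symm)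
      (tendsto_atTop_add_const_right _ _ (hdiv'.comp (tendsto_add_atTop_nat 1)))
  have hL : Tendsto (fun j : ℕ => (∑ k ∈ Finset.Icc 1 j, stmt13_f n α lam k)/2
      - (j₀:ℝ)/2 * stmt13_f n α lam 1) atTop atTop := by
    apply tendsto_atTop_add_const_right
    exact Tendsto.atTop_div_const two_pos hIcc
  have hKv : K / volume E ≠ ⊤ := by
    intro h
    rw [ENNReal.div_eq_top] at h
    tauto
  obtain ⟨j, hj⟩ := (hL.eventually (eventually_gt_atTop ((K / volume E).toReal))).exists
  have h1 : K / volume E < ENNReal.ofReal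
      ((∑ k ∈ Finset.Icc 1 j, stmt13_f n α lam k)/2 - (j₀:ℝ)/2 * stmt13_f n α lam 1) :=
    (ENNReal.lt_ofReal_iff_toReal_lt hKv).2 hj
  have h2 : K < ENNReal.ofReal
      ((∑ k ∈ Finset.Icc 1 j, stmt13_f n α lam k)/2 - (j₀:ℝ)/2 * stmt13_f n α lam 1)
        * volume E := by
    have h3 := ENNReal.mul_lt_mul_left hv0 hvfin h1
    rwa [ENNReal.div_mul_cancel hv0 hvfin] at h3
  exact absurd (hKey j) (not_le.2 h2)
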